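/- For every positive integer k, the identity ∑_{i=1}^{k} P_{2i} P_{2k-2i} = ∑_{i=1}^{k} P_{2i-1} P_{2k-2i+1} holds in the ring of symmetric functions, where P_0 = 1 and P_m = (1/2) ∑_{i=0}^m h_i e_{m-i}. -/

import Mathlib

open MvPolynomial Finset

variable (σ : Type*) [Fintype σ] [DecidableEq σ]

/-- The one-row Schur-P symmetric function: `P_0 = 1` and
`P_m = (1/2) ∑_{i=0}^m h_i e_{m-i}` for `m ≥ 1`. -/
noncomputable def schurP (m : ℕ) : MvPolynomial σ ℚ :=
  if m = 0 then 1
  else (1 / 2 : ℚ) • ∑ i ∈ range (m + 1), hsymm σ ℚ i * esymm σ ℚ (m - i)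

namespace SchurPAux

section Geom
variable {R : Type*} [CommRing R]

lemma geom_mul_one_sub (r : R) :
    PowerSeries.mk (fun n => r ^ n) * (1 - PowerSeries.C r * PowerSeries.X) = 1 := by
  ext n
  cases n with
  | zero => simp
  | succ n =>
    have h : (PowerSeries.mk fun n => r ^ n) * (PowerSeries.C r * PowerSeries.X)
        = PowerSeries.C r * (PowerSeries.X * PowerSeries.mk fun n => r ^ n) := by ring
    rw [mul_sub, mul_one, h, map_sub, PowerSeries.coeff_mk, PowerSeries.coeff_C_mul,
      PowerSeries.coeff_succ_X_mul, PowerSeries.coeff_mk, PowerSeries.coeff_one,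
      if_neg (Nat.succ_ne_zero n), pow_succ]
    ring

lemma rescale_C' (a r : R) : PowerSeries.rescale a (PowerSeries.C r) = PowerSeries.C r := by
  ext n
  rw [PowerSeries.coeff_rescale, PowerSeries.coeff_C]
  split_ifs with h
  · subst h; simp
  · simp

end Geom

lemma sum_count_univ (s : Multiset σ) : ∑ x : σ, Multiset.count x s = Multiset.card s := by
  rw [← Multiset.toFinset_sum_count_eq s]
  refine (Finset.sum_subset (Finset.subset_univ _) ?_).symm
  intro i _ hi
  simp only [Multiset.mem_toFinset] at hi
  exact Multiset.count_eq_zero_of_notMem hi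

lemma coeff_prod_geom (n : ℕ) :
    PowerSeries.coeff n (∏ i : σ, PowerSeries.mk (fun m => (X i : MvPolynomial σ ℚ) ^ m))
      = hsymm σ ℚ n := by
  rw [PowerSeries.coeff_prod]
  simp only [PowerSeries.coeff_mk]
  rw [hsymm]
  symm
  refine Finset.sum_bij' (fun s _ => Multiset.toFinsupp (s : Multiset σ))
    (fun l hl => ⟨Finsupp.toMultiset l, ?_⟩) ?_ ?_ ?_ ?_ ?_
  · rw [Finsupp.card_toMultiset]
    have := (Finset.mem_finsuppAntidiag'.mp hl).1
    exact this
  · intro s _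
    rw [Finset.mem_finsuppAntidiag]
    refine ⟨?_, Finset.subset_univ _⟩
    rw [show ⇑(Multiset.toFinsupp (s : Multiset σ)) = fun x => Multiset.count x (s : Multiset σ)
      from funext fun x => Multiset.toFinsupp_apply _ _]
    rw [sum_count_univ]; exact s.2
  · intro l hl
    exact Finset.mem_univ _
  · intro s _
    simp [Sym.ext_iff]
    rfl
  · intro l _
    simp
  · intro s _
    rw [Finset.prod_multiset_map_count]
    simp only [Multiset.toFinsupp_apply]
    refine Finset.prod_subset (Finset.subset_univ _) ?_
    intro i _ hi
    simp only [Multiset.mem_toFinset] at hi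
    rw [Multiset.count_eq_zero_of_notMem hi, pow_zero]

lemma coeff_prod_onesub (n : ℕ) :
    PowerSeries.coeff n
      (∏ i : σ, (1 + PowerSeries.C (X i : MvPolynomial σ ℚ) * PowerSeries.X))
      = esymm σ ℚ n := by
  have h : ∏ i : σ, (1 + PowerSeries.C (X i : MvPolynomial σ ℚ) * PowerSeries.X)
      = ∑ t ∈ (univ : Finset σ).powerset,
          PowerSeries.C (∏ i ∈ t, (X i : MvPolynomial σ ℚ)) * PowerSeries.X ^ #t := by
    simp_rw [add_comm (1 : PowerSeries (MvPolynomial σ ℚ))]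
    rw [Finset.prod_add]
    refine Finset.sum_congr rfl fun t _ => ?_
    rw [Finset.prod_const_one, mul_one, Finset.prod_mul_distrib, Finset.prod_const, map_prod]
  rw [h, map_sum]
  simp only [PowerSeries.coeff_C_mul, PowerSeries.coeff_X_pow]
  rw [esymm, Finset.powersetCard_eq_filter, Finset.sum_filter]
  refine Finset.sum_congr rfl fun t _ => ?_
  by_cases ht : n = #t
  · rw [if_pos ht, if_pos ht.symm, mul_one]
  · rw [if_neg ht, if_neg (Ne.symm ht), mul_zero]

noncomputable def Hs : PowerSeries (MvPolynomial σ ℚ) := PowerSeries.mk (hsymm σ ℚ)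
noncomputable def Es : PowerSeries (MvPolynomial σ ℚ) := PowerSeries.mk (esymm σ ℚ)

lemma key1 : Hs σ * PowerSeries.rescale (-1) (Es σ) = 1 := by
  have hH : Hs σ = ∏ i : σ, PowerSeries.mk (fun m => (X i : MvPolynomial σ ℚ) ^ m) := by
    ext n; rw [Hs, PowerSeries.coeff_mk, coeff_prod_geom]
  have hE : Es σ = ∏ i : σ, (1 + PowerSeries.C (X i : MvPolynomial σ ℚ) * PowerSeries.X) := by
    ext n; rw [Es, PowerSeries.coeff_mk, coeff_prod_onesub]
  rw [hH, hE, map_prod, ← Finset.prod_mul_distrib]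
  refine Finset.prod_eq_one fun i _ => ?_
  rw [map_add, map_one, map_mul, rescale_C', PowerSeries.rescale_neg_one_X]
  have h : 1 + PowerSeries.C (X i : MvPolynomial σ ℚ) * -PowerSeries.X
      = 1 - PowerSeries.C (X i : MvPolynomial σ ℚ) * PowerSeries.X := by ring
  rw [h]
  exact geom_mul_one_sub _

lemma key2 : PowerSeries.rescale (-1) (Hs σ) * Es σ = 1 := by
  have h := congrArg (PowerSeries.rescale (-1)) (key1 σ)
  rw [map_mul, map_one, PowerSeries.rescale_rescale] at h
  norm_num at h
  exact h

lemma key3 : (Hs σ * Es σ) * PowerSeries.rescale (-1) (Hs σ * Es σ) = 1 := by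
  rw [map_mul]
  calc (Hs σ * Es σ) * (PowerSeries.rescale (-1) (Hs σ) * PowerSeries.rescale (-1) (Es σ))
      = (Hs σ * PowerSeries.rescale (-1) (Es σ))
        * (PowerSeries.rescale (-1) (Hs σ) * Es σ) := by ring
    _ = 1 := by rw [key1, key2, one_mul]

noncomputable def q (n : ℕ) : MvPolynomial σ ℚ :=
  ∑ i ∈ range (n + 1), hsymm σ ℚ i * esymm σ ℚ (n - i)

lemma coeff_HE (n : ℕ) : PowerSeries.coeff n (Hs σ * Es σ) = q σ n := by
  rw [PowerSeries.coeff_mul, Finset.Nat.sum_antidiagonal_eq_sum_range_succ_mk, q]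
  simp [Hs, Es]

lemma main0 (N : ℕ) (hN : N ≠ 0) :
    ∑ m ∈ range (N + 1), q σ m * ((-1 : MvPolynomial σ ℚ) ^ (N - m) * q σ (N - m)) = 0 := by
  have h := congrArg (PowerSeries.coeff N) (key3 σ)
  rw [PowerSeries.coeff_mul, Finset.Nat.sum_antidiagonal_eq_sum_range_succ_mk,
    PowerSeries.coeff_one, if_neg hN] at h
  rw [← h]
  refine Finset.sum_congr rfl fun m _ => ?_
  rw [coeff_HE, PowerSeries.coeff_rescale, coeff_HE]

lemma split {M : Type*} [AddCommMonoid M] (f : ℕ → M) (k : ℕ) :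
    ∑ m ∈ range (2 * k + 1), f m
      = ∑ j ∈ range (k + 1), f (2 * j) + ∑ j ∈ range k, f (2 * j + 1) := by
  induction k with
  | zero => simp
  | succ k ih =>
    have h1 : 2 * (k + 1) + 1 = (2 * k + 1) + 1 + 1 := by ring
    rw [h1, sum_range_succ, sum_range_succ, ih,
      sum_range_succ (fun j => f (2 * j)) (k + 1), sum_range_succ (fun j => f (2 * j + 1)) k]
    have e1 : 2 * (k + 1) = 2 * k + 1 + 1 := by ring
    rw [e1]
    abel

end SchurPAux

open SchurPAux

lemma hq (m : ℕ) (hm : m ≠ 0) : q σ m = (2 : ℚ) • schurP σ m := by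
  rw [schurP, if_neg hm, smul_smul]
  norm_num [q]

lemma hq0 : q σ 0 = 1 := by simp [q]

lemma hP0 : schurP σ 0 = 1 := by simp [schurP]

/-- For every positive integer `k`,
`∑_{i=1}^k P_{2i} P_{2k-2i} = ∑_{i=1}^k P_{2i-1} P_{2k-2i+1}`. -/
theorem sum_even_schurP_eq_sum_odd_schurP (k : ℕ) (hk : 1 ≤ k) :
    ∑ i ∈ Icc 1 k, schurP σ (2 * i) * schurP σ (2 * k - 2 * i) =
      ∑ i ∈ Icc 1 k, schurP σ (2 * i - 1) * schurP σ (2 * k - 2 * i + 1) := by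
  classical
  set P := schurP σ with hP
  have hp0 : P 0 = 1 := by rw [hP]; exact hP0 σ
  have h0 := main0 σ (2 * k) (by omega)
  rw [split (fun m => q σ m * ((-1 : MvPolynomial σ ℚ) ^ (2 * k - m) * q σ (2 * k - m))) k] at h0
  -- simplify the even part signs
  have hev : ∑ j ∈ range (k + 1),
        q σ (2 * j) * ((-1 : MvPolynomial σ ℚ) ^ (2 * k - 2 * j) * q σ (2 * k - 2 * j))
      = ∑ j ∈ range (k + 1), q σ (2 * j) * q σ (2 * k - 2 * j) := by
    refine Finset.sum_congr rfl fun j _ => ?_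
    have h2 : Even (2 * k - 2 * j) := ⟨k - j, by omega⟩
    rw [h2.neg_one_pow, one_mul]
  have hodd : ∑ j ∈ range k,
        q σ (2 * j + 1) * ((-1 : MvPolynomial σ ℚ) ^ (2 * k - (2 * j + 1))
          * q σ (2 * k - (2 * j + 1)))
      = -∑ j ∈ range k, q σ (2 * j + 1) * q σ (2 * k - 2 * j - 1) := by
    rw [← Finset.sum_neg_distrib]
    refine Finset.sum_congr rfl fun j hj => ?_
    have hjk : j < k := Finset.mem_range.mp hj
    have h2 : Odd (2 * k - (2 * j + 1)) := ⟨k - j - 1, by omega⟩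
    have e1 : 2 * k - (2 * j + 1) = 2 * k - 2 * j - 1 := by omega
    rw [h2.neg_one_pow, e1, neg_one_mul, mul_neg]
  rw [hev, hodd, ← sub_eq_add_neg, sub_eq_zero] at h0
  -- even side equals 4 • LHS
  have hrange : range (k + 1) = insert 0 (Icc 1 k) := by
    ext m
    simp only [Finset.mem_range, Finset.mem_insert, Finset.mem_Icc]
    omega
  have hA : ∑ j ∈ range (k + 1), q σ (2 * j) * q σ (2 * k - 2 * j)
      = (4 : ℚ) • ∑ i ∈ Icc 1 k, P (2 * i) * P (2 * k - 2 * i) := by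
    rw [hrange, Finset.sum_insert (by simp)]
    have hterm : ∀ i ∈ Icc 1 k, q σ (2 * i) * q σ (2 * k - 2 * i)
        = (4 : ℚ) • (P (2 * i) * P (2 * k - 2 * i))
          - (if i = k then (2 : ℚ) • P (2 * k) else 0) := by
      intro i hi
      simp only [Finset.mem_Icc] at hi
      rw [hq σ (2 * i) (by omega)]
      by_cases hik : i = k
      · rw [if_pos hik, hik]
        have e0 : 2 * k - 2 * k = 0 := by omega
        rw [e0, hq0, ← hP, hp0, mul_one, mul_one]
        rw [show (4 : ℚ) = 2 + 2 by norm_num, add_smul]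
        abel
      · rw [if_neg hik, sub_zero, hq σ (2 * k - 2 * i) (by omega), ← hP,
          smul_mul_smul_comm]
        norm_num
    rw [Finset.sum_congr rfl hterm, Finset.sum_sub_distrib,
      Finset.sum_ite_eq' (Icc 1 k) k (fun _ => (2 : ℚ) • P (2 * k)),
      if_pos (by simp [Finset.mem_Icc]; omega), ← Finset.smul_sum]
    have e0 : 2 * (0 : ℕ) = 0 := by omega
    rw [e0, hq0, one_mul, Nat.sub_zero, hq σ (2 * k) (by omega), ← hP]
    abel
  -- odd side equals 4 • RHS
  have hB : ∑ j ∈ range k, q σ (2 * j + 1) * q σ (2 * k - 2 * j - 1)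
      = (4 : ℚ) • ∑ i ∈ Icc 1 k, P (2 * i - 1) * P (2 * k - 2 * i + 1) := by
    rw [← Finset.Ico_add_one_right_eq_Icc, Finset.sum_Ico_eq_sum_range,
      show k + 1 - 1 = k from rfl, Finset.smul_sum]
    refine Finset.sum_congr rfl fun j hj => ?_
    have hjk : j < k := Finset.mem_range.mp hj
    have e1 : 2 * (1 + j) - 1 = 2 * j + 1 := by omega
    have e2 : 2 * k - 2 * (1 + j) + 1 = 2 * k - 2 * j - 1 := by omega
    rw [e1, e2, hq σ (2 * j + 1) (by omega), hq σ (2 * k - 2 * j - 1) (by omega), ← hP,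
      smul_mul_smul_comm]
    norm_num
  rw [hA, hB] at h0
  calc ∑ i ∈ Icc 1 k, P (2 * i) * P (2 * k - 2 * i)
      = (4⁻¹ : ℚ) • ((4 : ℚ) • ∑ i ∈ Icc 1 k, P (2 * i) * P (2 * k - 2 * i)) := by
        rw [smul_smul]; norm_num
    _ = (4⁻¹ : ℚ) • ((4 : ℚ) • ∑ i ∈ Icc 1 k, P (2 * i - 1) * P (2 * k - 2 * i + 1)) := by
        rw [h0]
    _ = ∑ i ∈ Icc 1 k, P (2 * i - 1) * P (2 * k - 2 * i + 1) := by
        rw [smul_smul]; norm_num
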